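/- For all T ≥ 0, (1/12)·∫_{-T}^{T} (T - |r|)·r·tanh(π r) dr ≤ T³/36 - T/144 + ζ(3)/(16π³). -/

import Mathlib

open Real MeasureTheory Set

lemma aux_integrable_pow_exp (k : ℕ) {b : ℝ} (hb : 0 < b) :
    IntegrableOn (fun x : ℝ => x ^ k * Real.exp (-b * x)) (Ioi 0) := by
  have h := integrableOn_rpow_mul_exp_neg_mul_rpow (p := 1) (s := (k : ℝ)) (b := b)
      (lt_of_lt_of_le neg_one_lt_zero (Nat.cast_nonneg k)) one_pos hb
  simpa [Real.rpow_natCast, Real.rpow_one] using h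

lemma aux_integral_pow_exp (k : ℕ) {b : ℝ} (hb : 0 < b) :
    ∫ x in Ioi (0:ℝ), x ^ k * Real.exp (-b * x) = k.factorial / b ^ (k + 1) := by
  have h := integral_rpow_mul_exp_neg_mul_rpow (p := 1) (q := (k : ℝ)) one_pos
      (lt_of_lt_of_le neg_one_lt_zero (Nat.cast_nonneg k)) hb
  simp only [Real.rpow_natCast, Real.rpow_one, div_one, one_div, mul_one] at h
  rw [h]
  have h1 : ((k : ℝ) + 1) = ((k + 1 : ℕ) : ℝ) := by push_cast; ring
  rw [show -((k : ℝ) + 1) = -((k + 1 : ℕ) : ℝ) by rw [← h1],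
    Real.rpow_neg hb.le, Real.rpow_natCast, Real.Gamma_nat_eq_factorial]
  ring

lemma aux_tanh (x : ℝ) : Real.tanh x = 1 - 2 / (Real.exp (2 * x) + 1) := by
  rw [Real.tanh_eq_sinh_div_cosh, Real.sinh_eq, Real.cosh_eq]
  have h1 : Real.exp x ≠ 0 := (Real.exp_pos x).ne'
  have h3 : Real.exp (2 * x) + 1 > 0 := by positivity
  have e2 : Real.exp (2 * x) = Real.exp x * Real.exp x := by
    rw [two_mul, Real.exp_add]
  have h2 : Real.exp x + Real.exp (-x) > 0 := by positivity
  rw [Real.exp_neg] at *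
  field_simp
  ring_nf
  rw [show Real.exp (x * 2) = Real.exp x * Real.exp x by rw [mul_comm]; exact e2]
  ring

lemma aux_eta {k : ℕ} {S : ℝ} (h : HasSum (fun n : ℕ => 1 / ((n : ℝ) + 1) ^ k) S) :
    HasSum (fun n : ℕ => (-1 : ℝ) ^ n / ((n : ℝ) + 1) ^ k) ((1 - 2 / 2 ^ k) * S) := by
  set f : ℕ → ℝ := fun n => if Odd n then 2 / ((n : ℝ) + 1) ^ k else 0 with hf
  have hg : Function.Injective (fun n : ℕ => 2 * n + 1) := by
    intro a b hab
    have h2 : 2 * a + 1 = 2 * b + 1 := hab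
    omega
  have hcomp : (f ∘ fun n : ℕ => 2 * n + 1) = fun n : ℕ => (2 / 2 ^ k) * (1 / ((n : ℝ) + 1) ^ k) := by
    funext n
    simp only [hf, Function.comp_apply, if_pos (odd_two_mul_add_one n)]
    push_cast
    rw [show (2 * (n : ℝ) + 1 + 1) = 2 * ((n : ℝ) + 1) by ring, mul_pow]
    have : ((n : ℝ) + 1) ^ k ≠ 0 := by positivity
    field_simp
  have hb : HasSum f ((2 / 2 ^ k) * S) := by
    rw [← hg.hasSum_iff (a := (2 / 2 ^ k) * S) ?_]
    · rw [hcomp]; exact h.mul_left _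
    · intro x hx
      rcases Nat.even_or_odd x with he | ho
      · simp [hf, Nat.not_odd_iff_even.2 he]
      · obtain ⟨m, hm⟩ := ho
        exact absurd ⟨m, show 2 * m + 1 = x by omega⟩ hx
  have key : (fun n : ℕ => (-1 : ℝ) ^ n / ((n : ℝ) + 1) ^ k)
      = fun n : ℕ => 1 / ((n : ℝ) + 1) ^ k - f n := by
    funext n
    rcases Nat.even_or_odd n with he | ho
    · simp [hf, Nat.not_odd_iff_even.2 he, he.neg_one_pow]
    · simp only [hf, if_pos ho, ho.neg_one_pow]
      have h0 : ((n : ℝ) + 1) ^ k ≠ 0 := by positivity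
      field_simp
      norm_num
  rw [key, show (1 - 2 / 2 ^ k) * S = S - (2 / 2 ^ k) * S by ring]
  exact h.sub hb

lemma aux_eta2 : HasSum (fun n : ℕ => (-1 : ℝ) ^ n / ((n : ℝ) + 1) ^ 2) (π ^ 2 / 12) := by
  have h := (hasSum_nat_add_iff' (f := fun n : ℕ => (1 : ℝ) / (n : ℝ) ^ 2) 1).mpr hasSum_zeta_two
  simp only [Finset.range_one, Finset.sum_singleton, Nat.cast_zero] at h
  norm_num at h
  have h' : HasSum (fun n : ℕ => 1 / ((n : ℝ) + 1) ^ 2) (π ^ 2 / 6) := by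
    simpa [one_div] using h
  have := aux_eta h'
  convert this using 1
  norm_num
  ring

lemma aux_zeta3 : HasSum (fun n : ℕ => 1 / ((n : ℝ) + 1) ^ 3) ((riemannZeta 3).re) := by
  have hsum : Summable (fun n : ℕ => 1 / (n : ℝ) ^ 3) := summable_one_div_nat_pow.mpr (by norm_num)
  have hz : riemannZeta 3 = ∑' n : ℕ, 1 / (n : ℂ) ^ 3 := by
    have := zeta_nat_eq_tsum_of_gt_one (k := 3) (by norm_num)
    simpa using this
  have hre : (riemannZeta 3).re = ∑' n : ℕ, 1 / (n : ℝ) ^ 3 := by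
    rw [hz, show (fun n : ℕ => 1 / (n : ℂ) ^ 3) = fun n : ℕ => ((1 / (n : ℝ) ^ 3 : ℝ) : ℂ) by
      funext n; push_cast; ring, ← Complex.ofReal_tsum, Complex.ofReal_re]
  have h := (hasSum_nat_add_iff' (f := fun n : ℕ => (1 : ℝ) / (n : ℝ) ^ 3) 1).mpr hsum.hasSum
  simp only [Finset.range_one, Finset.sum_singleton, Nat.cast_zero] at h
  norm_num at h
  rw [hre]
  simpa [one_div] using h

lemma aux_eta3 : HasSum (fun n : ℕ => (-1 : ℝ) ^ n / ((n : ℝ) + 1) ^ 3) ((3 / 4) * (riemannZeta 3).re) := by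
  have := aux_eta aux_zeta3
  convert this using 2
  norm_num


lemma aux_ptwise {k : ℕ} {x : ℝ} (hx : 0 < x) :
    ∑' n : ℕ, (-1 : ℝ) ^ n * (x ^ k * Real.exp (-(2 * π * (n + 1)) * x))
      = x ^ k / (Real.exp (2 * π * x) + 1) := by
  have hlt : ‖-Real.exp (-(2 * π * x))‖ < 1 := by
    rw [norm_neg, Real.norm_eq_abs, abs_of_pos (Real.exp_pos _)]
    rw [Real.exp_lt_one_iff]
    have : 0 < 2 * π * x := by positivity
    linarith
  have hterm : ∀ n : ℕ, (-1 : ℝ) ^ n * (x ^ k * Real.exp (-(2 * π * (n + 1)) * x))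
      = (x ^ k * Real.exp (-(2 * π * x))) * (-Real.exp (-(2 * π * x))) ^ n := by
    intro n
    have hpow : (-Real.exp (-(2 * π * x))) ^ n
        = (-1 : ℝ) ^ n * Real.exp ((n : ℝ) * (-(2 * π * x))) := by
      rw [neg_pow, Real.exp_nat_mul]
    rw [hpow, show -(2 * π * ((n : ℝ) + 1)) * x = (n : ℝ) * (-(2 * π * x)) + (-(2 * π * x)) by ring,
      Real.exp_add]
    ring
  simp_rw [hterm]
  rw [tsum_mul_left, tsum_geometric_of_norm_lt_one hlt]
  rw [sub_neg_eq_add]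
  have h1 : Real.exp (2 * π * x) + 1 ≠ 0 := by positivity
  have h2 : (1 : ℝ) + Real.exp (-(2 * π * x)) ≠ 0 := by positivity
  rw [Real.exp_neg]
  have h3 : Real.exp (2 * π * x) ≠ 0 := (Real.exp_pos _).ne'
  field_simp

lemma aux_intOn (k : ℕ) : IntegrableOn (fun x : ℝ => x ^ k / (Real.exp (2 * π * x) + 1)) (Ioi 0) := by
  have hmeas : AEStronglyMeasurable (fun x : ℝ => x ^ k / (Real.exp (2 * π * x) + 1))
      (volume.restrict (Ioi 0)) := by
    apply Continuous.aestronglyMeasurable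
    exact (continuous_pow k).div (by continuity) (fun x => by positivity)
  refine Integrable.mono (aux_integrable_pow_exp k (b := 2 * π) (by positivity)) hmeas ?_
  filter_upwards [ae_restrict_mem measurableSet_Ioi] with x hx
  have h1 : (0:ℝ) < Real.exp (2 * π * x) + 1 := by positivity
  have h2 : Real.exp (-(2 * π * x)) * Real.exp (2 * π * x) = 1 := by
    rw [← Real.exp_add]; simp
  have hx0 : (0:ℝ) < x := hx
  rw [Real.norm_eq_abs, Real.norm_eq_abs, abs_of_nonneg (by positivity),
    abs_of_nonneg (by positivity), div_le_iff₀ h1]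
  have h3 : -(2 * π) * x = -(2 * π * x) := by ring
  rw [h3]
  nlinarith [pow_nonneg hx0.le k, Real.exp_pos (-(2 * π * x)), Real.exp_pos (2 * π * x)]

lemma aux_J (k : ℕ) {S : ℝ} (hS : HasSum (fun n : ℕ => (-1:ℝ)^n / ((n:ℝ)+1)^(k+1)) S) :
    ∫ x in Ioi (0:ℝ), x ^ k / (Real.exp (2 * π * x) + 1)
      = (k.factorial / (2 * π) ^ (k + 1)) * S := by
  set F : ℕ → ℝ → ℝ := fun n x => (-1:ℝ)^n * (x ^ k * Real.exp (-(2 * π * ((n:ℝ)+1)) * x)) with hF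
  have hb : ∀ n : ℕ, (0:ℝ) < 2 * π * ((n:ℝ)+1) := fun n => by positivity
  have hint : ∀ n, Integrable (F n) (volume.restrict (Ioi 0)) := fun n =>
    ((aux_integrable_pow_exp k (hb n)).const_mul _)
  have hnorm : ∀ n, (∫ x in Ioi (0:ℝ), ‖F n x‖)
      = (k.factorial : ℝ) / (2 * π * ((n:ℝ)+1)) ^ (k + 1) := by
    intro n
    rw [← aux_integral_pow_exp k (hb n)]
    apply setIntegral_congr_fun measurableSet_Ioi
    intro x hx
    have hx0 : (0:ℝ) < x := hx
    simp [hF, abs_mul, abs_pow, abs_of_pos hx0, abs_of_pos (Real.exp_pos _)]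
  have hs0 : Summable (fun n : ℕ => 1 / ((n:ℝ)+1) ^ (k+1)) := by
    have h := hS.summable.abs
    refine h.congr fun n => ?_
    rw [abs_div, abs_pow, abs_neg, abs_one, one_pow, abs_pow, abs_of_nonneg (by positivity)]
  have hsum_norm : Summable (fun n => ∫ x in Ioi (0:ℝ), ‖F n x‖) := by
    refine ((hs0.mul_left ((k.factorial : ℝ) / (2 * π) ^ (k+1))).congr fun n => ?_).congr
      fun n => (hnorm n).symm
    rw [div_mul_div_comm, mul_one, ← mul_pow]
  have hmain := hasSum_integral_of_summable_integral_norm hint hsum_norm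
  have hI : (∫ x in Ioi (0:ℝ), (∑' n, F n x))
      = ∫ x in Ioi (0:ℝ), x ^ k / (Real.exp (2 * π * x) + 1) :=
    setIntegral_congr_fun measurableSet_Ioi (fun x hx => aux_ptwise hx)
  have hval : ∀ n, (∫ x in Ioi (0:ℝ), F n x)
      = (-1:ℝ)^n * ((k.factorial : ℝ) / (2 * π * ((n:ℝ)+1)) ^ (k+1)) := by
    intro n
    simp only [hF]
    rw [MeasureTheory.integral_const_mul, aux_integral_pow_exp k (hb n)]
  have h2 : HasSum (fun n : ℕ => (-1:ℝ)^n * ((k.factorial : ℝ) / (2 * π * ((n:ℝ)+1)) ^ (k+1)))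
      (∫ x in Ioi (0:ℝ), x ^ k / (Real.exp (2 * π * x) + 1)) := by
    rw [← hI]
    exact hmain.congr_fun (fun n => (hval n).symm)
  have h3 : HasSum (fun n : ℕ => (-1:ℝ)^n * ((k.factorial : ℝ) / (2 * π * ((n:ℝ)+1)) ^ (k+1)))
      ((k.factorial / (2 * π) ^ (k + 1)) * S) := by
    refine (hS.mul_left ((k.factorial : ℝ) / (2 * π) ^ (k+1))).congr_fun fun n => ?_
    rw [div_mul_div_comm, ← mul_pow, ← mul_div_assoc, mul_comm ((-1:ℝ)^n) (k.factorial:ℝ)]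
  exact h2.unique h3

theorem stmt0 (T : ℝ) (hT : 0 ≤ T) :
    (1/12) * ∫ r in (-T)..T, (T - |r|) * r * Real.tanh (π * r) ≤
      T^3/36 - T/144 + (riemannZeta 3).re / (16 * π^3) := by
  have hπ : 0 < π := Real.pi_pos
  set g : ℝ → ℝ := fun r => (T - |r|) * r * Real.tanh (π * r) with hg
  have hctanh : Continuous Real.tanh := by
    have he : Real.tanh = fun x => Real.sinh x / Real.cosh x :=
      funext fun x => Real.tanh_eq_sinh_div_cosh x
    rw [he]
    exact Real.continuous_sinh.div Real.continuous_cosh (fun x => (Real.cosh_pos x).ne')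
  have hcg : Continuous g := by
    apply Continuous.mul
    · exact ((continuous_const.sub continuous_abs).mul continuous_id)
    · exact hctanh.comp (continuous_const.mul continuous_id)
  set K : ℝ := ∫ r in (0:ℝ)..T, (T - r) * r / (Real.exp (2 * π * r) + 1) with hK
  -- symmetry
  have hneg : (∫ r in (-T)..(0:ℝ), g r) = ∫ r in (0:ℝ)..T, g r := by
    have h := intervalIntegral.integral_comp_neg (a := (0:ℝ)) (b := T) g
    have hgg : (fun x => g (-x)) = g := by
      funext x
      simp only [hg, abs_neg, mul_neg, neg_mul, Real.tanh_neg]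
      ring
    rw [hgg] at h
    simpa using h.symm
  have hsplit : (∫ r in (-T)..T, g r) = 2 * ∫ r in (0:ℝ)..T, g r := by
    rw [← intervalIntegral.integral_add_adjacent_intervals
      (hcg.intervalIntegrable (-T) 0) (hcg.intervalIntegrable 0 T), hneg]
    ring
  -- drop the abs on [0,T]
  have habs : (∫ r in (0:ℝ)..T, g r) = ∫ r in (0:ℝ)..T, (T - r) * r * Real.tanh (π * r) := by
    apply intervalIntegral.integral_congr
    intro r hr
    rw [Set.uIcc_of_le hT] at hr
    simp only [hg]
    rw [abs_of_nonneg hr.1]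
  -- tanh expansion
  have hexp : ∀ r : ℝ, Real.tanh (π * r) = 1 - 2 / (Real.exp (2 * π * r) + 1) := by
    intro r
    rw [aux_tanh (π * r), ← mul_assoc]
  have hcdiv : Continuous fun r : ℝ => (T - r) * r / (Real.exp (2 * π * r) + 1) := by
    apply Continuous.div
    · exact (continuous_const.sub continuous_id).mul continuous_id
    · continuity
    · intro x; positivity
  have htanh : (∫ r in (0:ℝ)..T, (T - r) * r * Real.tanh (π * r))
      = (∫ r in (0:ℝ)..T, (T - r) * r) - 2 * K := by
    have hfun : (fun r => (T - r) * r * Real.tanh (π * r))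
        = fun r => (T - r) * r - 2 * ((T - r) * r / (Real.exp (2 * π * r) + 1)) := by
      funext r
      rw [hexp r]
      ring
    have i1 : IntervalIntegrable (fun r : ℝ => (T - r) * r) volume 0 T :=
      (Continuous.intervalIntegrable (by continuity) 0 T)
    have i2 : IntervalIntegrable (fun r : ℝ => 2 * ((T - r) * r / (Real.exp (2 * π * r) + 1)))
        volume 0 T := (hcdiv.intervalIntegrable 0 T).const_mul 2
    rw [hfun, intervalIntegral.integral_sub i1 i2, intervalIntegral.integral_const_mul]
  -- polynomial integral
  have hpoly : (∫ r in (0:ℝ)..T, (T - r) * r) = T ^ 3 / 6 := by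
    have hfun : (fun r : ℝ => (T - r) * r) = fun r : ℝ => T * r - r ^ 2 := by
      funext r; ring
    have i3 : IntervalIntegrable (fun r : ℝ => T * r) volume 0 T :=
      (Continuous.intervalIntegrable (by continuity) 0 T)
    have i4 : IntervalIntegrable (fun r : ℝ => r ^ 2) volume 0 T :=
      (continuous_pow 2).intervalIntegrable 0 T
    rw [hfun, intervalIntegral.integral_sub i3 i4, intervalIntegral.integral_const_mul,
      integral_id, integral_pow]
    ring
  -- the exact improper integrals
  have hJ1 : (∫ x in Ioi (0:ℝ), x ^ 1 / (Real.exp (2 * π * x) + 1)) = 1 / 48 := by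
    rw [aux_J 1 aux_eta2]
    have : (Nat.factorial 1 : ℝ) = 1 := by norm_num [Nat.factorial]
    rw [this]
    field_simp
    all_goals ring
  have hJ2 : (∫ x in Ioi (0:ℝ), x ^ 2 / (Real.exp (2 * π * x) + 1))
      = 3 * (riemannZeta 3).re / (16 * π ^ 3) := by
    rw [aux_J 2 aux_eta3]
    have : (Nat.factorial 2 : ℝ) = 2 := by norm_num [Nat.factorial]
    rw [this]
    field_simp
    all_goals ring
  -- lower bound for K
  set z3 : ℝ := (riemannZeta 3).re with hz3
  have hKlow : T / 48 - 3 * z3 / (16 * π ^ 3) ≤ K := by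
    set φ : ℝ → ℝ := fun x => (T - x) * x / (Real.exp (2 * π * x) + 1) with hφ
    have hφeq : φ = fun x => T * (x ^ 1 / (Real.exp (2 * π * x) + 1))
        - x ^ 2 / (Real.exp (2 * π * x) + 1) := by
      funext x
      simp only [hφ, pow_one]
      ring
    have hφint : IntegrableOn φ (Ioi 0) := by
      rw [hφeq]
      exact ((aux_intOn 1).const_mul T).sub (aux_intOn 2)
    have hIoi : (∫ x in Ioi (0:ℝ), φ x) = T / 48 - 3 * z3 / (16 * π ^ 3) := by
      rw [hφeq, MeasureTheory.integral_sub ((aux_intOn 1).const_mul T) (aux_intOn 2),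
        MeasureTheory.integral_const_mul, hJ1, hJ2]
      ring
    have hunion : Ioc (0:ℝ) T ∪ Ioi T = Ioi 0 := Ioc_union_Ioi_eq_Ioi hT
    have hdisj : Disjoint (Ioc (0:ℝ) T) (Ioi T) := Ioc_disjoint_Ioi le_rfl
    have hsplit2 : (∫ x in Ioi (0:ℝ), φ x)
        = (∫ x in Ioc (0:ℝ) T, φ x) + ∫ x in Ioi T, φ x := by
      rw [← hunion, MeasureTheory.setIntegral_union hdisj measurableSet_Ioi
        (hφint.mono_set (hunion ▸ subset_union_left))
        (hφint.mono_set (hunion ▸ subset_union_right))]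
    have htail : (∫ x in Ioi T, φ x) ≤ 0 := by
      apply MeasureTheory.setIntegral_nonpos measurableSet_Ioi
      intro x hx
      have hx1 : T < x := hx
      have hx0 : (0:ℝ) ≤ x := le_of_lt (lt_of_le_of_lt hT hx1)
      apply div_nonpos_of_nonpos_of_nonneg
      · apply mul_nonpos_of_nonpos_of_nonneg <;> linarith
      · positivity
    have hKeq : K = ∫ x in Ioc (0:ℝ) T, φ x := by
      rw [hK, intervalIntegral.integral_of_le hT]
    rw [hKeq]
    linarith [hsplit2, htail, hIoi.ge, hIoi.le]
  -- conclusion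
  rw [hsplit, habs, htanh, hpoly]
  have h3 : 3 * (z3 / (16 * π ^ 3)) = 3 * z3 / (16 * π ^ 3) := by ring
  nlinarith [hKlow, h3]
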